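/- Let Λ be defined on continuous f : ℝ^d → ℝ_+ by (Λf)(x) = ∫₀^∞ e^{-rt} E_x[p ψ(X_t) + (1−p) f(X_t)] F(dt), where sup_x E_x[e^{-2rt}(1+|X_t|²)] ≤ 1+|x|² for all t (supermartingale-type bound). Then for f, g with finite weighted norm ‖·‖ (with weight (1+|x|²)^{1/2}), one has ‖Λf − Λg‖ ≤ (1−p)‖f − g‖. -/

import Mathlib

open MeasureTheory Set

/-- The operator `Λ` defined by
`(Λ f)(x) = ∫₀^∞ e^{-rt} E_x[p ψ(X_t) + (1-p) f(X_t)] F(dt)`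
is a `(1-p)`-contraction in the weighted sup-norm with weight `(1+‖x‖²)^{1/2}`,
under the supermartingale-type moment bound `E_x[e^{-2rt}(1+‖X_t‖²)] ≤ 1+‖x‖²`. -/
theorem stmt3 {d : ℕ} (r p : ℝ) (hr : 0 < r) (hp : p ∈ Set.Ioo (0 : ℝ) 1)
    (μ : ℝ → EuclideanSpace ℝ (Fin d) → Measure (EuclideanSpace ℝ (Fin d)))
    (hprob : ∀ t x, IsProbabilityMeasure (μ t x))
    (F : Measure ℝ) [IsProbabilityMeasure F] (hF : F (Set.Iio 0) = 0)
    (ψ f g : EuclideanSpace ℝ (Fin d) → ℝ)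
    (hψc : Continuous ψ) (hψ0 : ∀ x, 0 ≤ ψ x)
    (hfc : Continuous f) (hf0 : ∀ x, 0 ≤ f x)
    (hgc : Continuous g) (hg0 : ∀ x, 0 ≤ g x)
    (hmom : ∀ t ≥ (0 : ℝ), ∀ x,
      ∫ y, Real.exp (-2 * r * t) * (1 + ‖y‖ ^ 2) ∂(μ t x) ≤ 1 + ‖x‖ ^ 2)
    (hmomInt : ∀ t x, Integrable (fun y => 1 + ‖y‖ ^ 2) (μ t x))
    (hintψ : ∀ t x, Integrable ψ (μ t x))
    (hintf : ∀ t x, Integrable f (μ t x))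
    (hintg : ∀ t x, Integrable g (μ t x))
    (houtf : ∀ x, Integrable
      (fun t => Real.exp (-r * t) * ∫ y, (p * ψ y + (1 - p) * f y) ∂(μ t x)) F)
    (houtg : ∀ x, Integrable
      (fun t => Real.exp (-r * t) * ∫ y, (p * ψ y + (1 - p) * g y) ∂(μ t x)) F)
    (C : ℝ) (hC : ∀ x, |f x - g x| ≤ C * Real.sqrt (1 + ‖x‖ ^ 2)) :
    ∀ x, |(∫ t, Real.exp (-r * t) * ∫ y, (p * ψ y + (1 - p) * f y) ∂(μ t x) ∂F)
        - (∫ t, Real.exp (-r * t) * ∫ y, (p * ψ y + (1 - p) * g y) ∂(μ t x) ∂F)|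
      ≤ (1 - p) * C * Real.sqrt (1 + ‖x‖ ^ 2) := by
  intro x
  obtain ⟨hp0, hp1⟩ := hp
  -- C is nonnegative
  have hC0 : 0 ≤ C := by
    have h1 := (abs_nonneg _).trans (hC 0)
    have h2 : 0 < Real.sqrt (1 + ‖(0 : EuclideanSpace ℝ (Fin d))‖ ^ 2) :=
      Real.sqrt_pos.mpr (by positivity)
    nlinarith
  -- a.e. t ≥ 0 under F
  have haet : ∀ᵐ t ∂F, 0 ≤ t := by
    rw [MeasureTheory.ae_iff]
    convert hF using 2
    ext t
    simp [not_le]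
  -- pointwise bound for each t ≥ 0
  have key : ∀ t : ℝ, 0 ≤ t →
      ‖Real.exp (-r * t) * (∫ y, (p * ψ y + (1 - p) * f y) ∂(μ t x))
        - Real.exp (-r * t) * (∫ y, (p * ψ y + (1 - p) * g y) ∂(μ t x))‖
      ≤ (1 - p) * C * Real.sqrt (1 + ‖x‖ ^ 2) := by
    intro t ht
    haveI := hprob t x
    have hint1 : Integrable (fun y => p * ψ y + (1 - p) * f y) (μ t x) :=
      ((hintψ t x).const_mul p).add ((hintf t x).const_mul (1 - p))
    have hint2 : Integrable (fun y => p * ψ y + (1 - p) * g y) (μ t x) :=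
      ((hintψ t x).const_mul p).add ((hintg t x).const_mul (1 - p))
    have hdiff : (∫ y, (p * ψ y + (1 - p) * f y) ∂(μ t x))
        - (∫ y, (p * ψ y + (1 - p) * g y) ∂(μ t x))
        = (1 - p) * ∫ y, (f y - g y) ∂(μ t x) := by
      rw [MeasureTheory.integral_add ((hintψ t x).const_mul p)
            ((hintf t x).const_mul (1 - p)),
          MeasureTheory.integral_add ((hintψ t x).const_mul p)
            ((hintg t x).const_mul (1 - p)),
          MeasureTheory.integral_sub (hintf t x) (hintg t x),
          MeasureTheory.integral_const_mul, MeasureTheory.integral_const_mul,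
          MeasureTheory.integral_const_mul]
      ring
    -- integrability of sqrt(1+‖y‖²)
    have hsqrtInt : Integrable (fun y => Real.sqrt (1 + ‖y‖ ^ 2)) (μ t x) := by
      refine (hmomInt t x).mono ?_ ?_
      · exact (Real.continuous_sqrt.comp
          (by continuity : Continuous fun y : EuclideanSpace ℝ (Fin d) =>
            1 + ‖y‖ ^ 2)).aestronglyMeasurable
      · filter_upwards with y
        rw [Real.norm_eq_abs, Real.norm_eq_abs, abs_of_nonneg (Real.sqrt_nonneg _),
          abs_of_nonneg (by positivity)]
        calc Real.sqrt (1 + ‖y‖ ^ 2) ≤ Real.sqrt ((1 + ‖y‖ ^ 2) ^ 2) := by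
              apply Real.sqrt_le_sqrt; nlinarith [sq_nonneg (‖y‖ ^ 2), norm_nonneg y]
          _ = 1 + ‖y‖ ^ 2 := Real.sqrt_sq (by positivity)
    -- Jensen: ∫ sqrt ≤ sqrt ∫
    have hjensen : (∫ y, Real.sqrt (1 + ‖y‖ ^ 2) ∂(μ t x))
        ≤ Real.sqrt (∫ y, 1 + ‖y‖ ^ 2 ∂(μ t x)) := by
      refine Real.strictConcaveOn_sqrt.concaveOn.le_map_integral
        (Real.continuous_sqrt.continuousOn) isClosed_Ici ?_ (hmomInt t x) hsqrtInt
      filter_upwards with y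
      simp only [Set.mem_Ici]
      positivity
    -- moment bound
    have hmom2 : (∫ y, 1 + ‖y‖ ^ 2 ∂(μ t x))
        ≤ Real.exp (2 * r * t) * (1 + ‖x‖ ^ 2) := by
      have h := hmom t ht x
      rw [MeasureTheory.integral_const_mul] at h
      have he : 0 < Real.exp (-2 * r * t) := Real.exp_pos _
      have : Real.exp (2 * r * t) * Real.exp (-2 * r * t) = 1 := by
        rw [← Real.exp_add]; ring_nf; exact Real.exp_zero
      nlinarith [Real.exp_pos (2 * r * t)]
    have hsqrtmom : Real.sqrt (∫ y, 1 + ‖y‖ ^ 2 ∂(μ t x))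
        ≤ Real.exp (r * t) * Real.sqrt (1 + ‖x‖ ^ 2) := by
      calc Real.sqrt (∫ y, 1 + ‖y‖ ^ 2 ∂(μ t x))
          ≤ Real.sqrt (Real.exp (2 * r * t) * (1 + ‖x‖ ^ 2)) :=
            Real.sqrt_le_sqrt hmom2
        _ = Real.sqrt (Real.exp (2 * r * t)) * Real.sqrt (1 + ‖x‖ ^ 2) :=
            Real.sqrt_mul (Real.exp_nonneg _) _
        _ = Real.exp (r * t) * Real.sqrt (1 + ‖x‖ ^ 2) := by
            congr 1
            rw [show (2 : ℝ) * r * t = r * t + r * t by ring, Real.exp_add,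
              Real.sqrt_mul_self (Real.exp_nonneg _)]
    -- bound on the inner difference
    have hinner : |∫ y, (f y - g y) ∂(μ t x)| ≤ C * (∫ y, Real.sqrt (1 + ‖y‖ ^ 2) ∂(μ t x)) := by
      calc |∫ y, (f y - g y) ∂(μ t x)|
          ≤ ∫ y, |f y - g y| ∂(μ t x) := by
            simpa [Real.norm_eq_abs] using
              MeasureTheory.norm_integral_le_integral_norm (fun y => f y - g y) (μ := μ t x)
        _ ≤ ∫ y, C * Real.sqrt (1 + ‖y‖ ^ 2) ∂(μ t x) := by
            apply MeasureTheory.integral_mono ((hintf t x).sub (hintg t x)).abs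
              (hsqrtInt.const_mul C)
            intro y; exact hC y
        _ = C * ∫ y, Real.sqrt (1 + ‖y‖ ^ 2) ∂(μ t x) :=
            MeasureTheory.integral_const_mul _ _
    -- put everything together
    rw [← mul_sub, hdiff, Real.norm_eq_abs, abs_mul, abs_mul,
      abs_of_nonneg (Real.exp_nonneg _), abs_of_nonneg (by linarith : (0:ℝ) ≤ 1 - p)]
    have hchain : |∫ y, (f y - g y) ∂(μ t x)|
        ≤ C * (Real.exp (r * t) * Real.sqrt (1 + ‖x‖ ^ 2)) := by
      refine hinner.trans ?_
      have := hjensen.trans hsqrtmom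
      nlinarith [MeasureTheory.integral_nonneg
        (f := fun y : EuclideanSpace ℝ (Fin d) => Real.sqrt (1 + ‖y‖ ^ 2))
        (fun y => Real.sqrt_nonneg (1 + ‖y‖ ^ 2)) (μ := μ t x)]
    have hexp : Real.exp (-r * t) * Real.exp (r * t) = 1 := by
      rw [← Real.exp_add]; ring_nf; exact Real.exp_zero
    have h1p : 0 ≤ 1 - p := by linarith
    have habs : 0 ≤ |∫ y, (f y - g y) ∂(μ t x)| := abs_nonneg _
    have hepos : 0 < Real.exp (-r * t) := Real.exp_pos _
    calc Real.exp (-r * t) * ((1 - p) * |∫ y, (f y - g y) ∂(μ t x)|)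
        ≤ Real.exp (-r * t) * ((1 - p) * (C * (Real.exp (r * t) * Real.sqrt (1 + ‖x‖ ^ 2)))) :=
          mul_le_mul_of_nonneg_left (mul_le_mul_of_nonneg_left hchain h1p) hepos.le
      _ = (1 - p) * C * Real.sqrt (1 + ‖x‖ ^ 2) * (Real.exp (-r * t) * Real.exp (r * t)) := by
          ring
      _ = (1 - p) * C * Real.sqrt (1 + ‖x‖ ^ 2) := by rw [hexp, mul_one]
  -- combine over F
  rw [← MeasureTheory.integral_sub (houtf x) (houtg x)]
  rw [← Real.norm_eq_abs]
  have hle : ‖∫ t, (Real.exp (-r * t) * ∫ y, (p * ψ y + (1 - p) * f y) ∂(μ t x)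
      - Real.exp (-r * t) * ∫ y, (p * ψ y + (1 - p) * g y) ∂(μ t x)) ∂F‖
      ≤ ∫ _t, (1 - p) * C * Real.sqrt (1 + ‖x‖ ^ 2) ∂F := by
    apply MeasureTheory.norm_integral_le_of_norm_le (MeasureTheory.integrable_const _)
    filter_upwards [haet] with t ht
    exact key t ht
  simpa using hle
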